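/- With the Schur complement notation above: if additionally θ_j^{(k−1)} := 𝟙^⊤ M^{-1} R_j denotes the sum of entries of M^{-1} R_j, θ_{i_k}^{(k−1)} := 𝟙^⊤ M^{-1} r, and θ_j^{(k)} := 𝟙_k^⊤ M̄^{-1} R̄_j (with 𝟙 the all-ones vector), then 1 − θ_j^{(k)} = (1 − θ_j^{(k−1)}) − x·(1 − θ_{i_k}^{(k−1)}) where x = (R_{j,k} − R_j^⊤ M^{-1} r)/(d − r^⊤ M^{-1} r). -/

import Mathlib

open Matrix

theorem stmt9 (n : ℕ) (M : Matrix (Fin n) (Fin n) ℝ) (r : Fin n → ℝ) (d : ℝ)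
    (Mbar : Matrix (Fin n ⊕ Unit) (Fin n ⊕ Unit) ℝ)
    (hMbar : Mbar = Matrix.fromBlocks M (Matrix.of fun i _ => r i)
        (Matrix.of fun _ i => r i) (Matrix.of fun _ _ => d))
    (hpd : Mbar.PosDef)
    (Rj : Fin n → ℝ) (Rjk : ℝ) (x : ℝ)
    (hx : x = (Rjk - Rj ⬝ᵥ (M⁻¹ *ᵥ r)) / (d - r ⬝ᵥ (M⁻¹ *ᵥ r))) :
    1 - ∑ idx : Fin n ⊕ Unit, (Mbar⁻¹ *ᵥ (Sum.elim Rj fun _ => Rjk)) idx =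
      (1 - ∑ i : Fin n, (M⁻¹ *ᵥ Rj) i) - x * (1 - ∑ i : Fin n, (M⁻¹ *ᵥ r) i) := by
  -- M is symmetric
  have hMsym : Mᵀ = M := by
    ext i j
    have := congrFun (congrFun hpd.1 (Sum.inl j)) (Sum.inl i)
    simpa [hMbar, Matrix.conjTranspose_apply] using this.symm
  -- M is positive definite
  have hpdM : M.PosDef := by
    refine Matrix.PosDef.of_dotProduct_mulVec_pos ?_ ?_
    · ext i j
      have := congrFun (congrFun hpd.1 (Sum.inl j)) (Sum.inl i)
      simpa [hMbar, Matrix.conjTranspose_apply] using this.symm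
    · intro y hy
      have hy' : (Sum.elim y (0 : Unit → ℝ)) ≠ 0 := by
        intro h
        exact hy (funext fun i => congrFun h (Sum.inl i))
      have := hpd.dotProduct_mulVec_pos hy'
      simpa [hMbar, Matrix.fromBlocks_mulVec, dotProduct, Fintype.sum_sum_type,
        mulVec] using this
  have hMdet : IsUnit M.det := isUnit_iff_ne_zero.2 (ne_of_gt hpdM.det_pos)
  have hMM : M * M⁻¹ = 1 := Matrix.mul_nonsing_inv M hMdet
  have hMinvsym : M⁻¹ᵀ = M⁻¹ := by
    rw [Matrix.transpose_nonsing_inv, hMsym]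
  have hMr : M *ᵥ (M⁻¹ *ᵥ r) = r := by
    rw [mulVec_mulVec, hMM, one_mulVec]
  have hMRj : M *ᵥ (M⁻¹ *ᵥ Rj) = Rj := by
    rw [mulVec_mulVec, hMM, one_mulVec]
  -- symmetry swap in dot products
  have hswap : ∀ a b : Fin n → ℝ, a ⬝ᵥ (M⁻¹ *ᵥ b) = b ⬝ᵥ (M⁻¹ *ᵥ a) := by
    intro a b
    rw [dotProduct_mulVec, ← mulVec_transpose, hMinvsym, dotProduct_comm]
  -- the Schur complement is positive
  have hs : 0 < d - r ⬝ᵥ (M⁻¹ *ᵥ r) := by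
    have hz : (Sum.elim (-(M⁻¹ *ᵥ r)) (fun _ : Unit => (1:ℝ))) ≠ 0 := by
      intro h
      have := congrFun h (Sum.inr ())
      simpa using this
    have h2 := hpd.dotProduct_mulVec_pos hz
    have he : Mbar *ᵥ (Sum.elim (-(M⁻¹ *ᵥ r)) (fun _ : Unit => (1:ℝ)))
        = Sum.elim (0 : Fin n → ℝ) (fun _ : Unit => d - r ⬝ᵥ (M⁻¹ *ᵥ r)) := by
      funext idx
      rw [hMbar, Matrix.fromBlocks_mulVec]
      simp only [Sum.elim_comp_inl, Sum.elim_comp_inr]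
      cases idx with
      | inl i =>
        have hB : ((Matrix.of fun i (_ : Unit) => r i) *ᵥ fun _ => (1:ℝ)) i = r i := by
          simp [mulVec, dotProduct]
        have hA : (M *ᵥ (-(M⁻¹ *ᵥ r))) i = -(r i) := by
          rw [Matrix.mulVec_neg, hMr]; rfl
        simp [hA, hB]
      | inr u =>
        have hC : ((Matrix.of fun (_ : Unit) i => r i) *ᵥ (-(M⁻¹ *ᵥ r))) u
            = -(r ⬝ᵥ (M⁻¹ *ᵥ r)) := by
          simp [mulVec, dotProduct, mul_neg]
        have hD : ((Matrix.of fun (_ : Unit) (_ : Unit) => d) *ᵥ fun _ => (1:ℝ)) u = d := by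
          simp [mulVec, dotProduct]
        simp [hC, hD, sub_eq_neg_add, add_comm]
    rw [he] at h2
    simpa [dotProduct, Fintype.sum_sum_type] using h2
  have hsne : d - r ⬝ᵥ (M⁻¹ *ᵥ r) ≠ 0 := ne_of_gt hs
  -- the explicit solution
  set w : Fin n ⊕ Unit → ℝ :=
    Sum.elim (M⁻¹ *ᵥ Rj - x • (M⁻¹ *ᵥ r)) (fun _ => x) with hw
  have hsol : Mbar *ᵥ w = Sum.elim Rj (fun _ => Rjk) := by
    have hkey : M *ᵥ (M⁻¹ *ᵥ Rj - x • (M⁻¹ *ᵥ r)) = Rj - x • r := by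
      rw [Matrix.mulVec_sub, Matrix.mulVec_smul, hMRj, hMr]
    have hdot : r ⬝ᵥ (M⁻¹ *ᵥ Rj - x • (M⁻¹ *ᵥ r))
        = r ⬝ᵥ (M⁻¹ *ᵥ Rj) - x * (r ⬝ᵥ (M⁻¹ *ᵥ r)) := by
      rw [dotProduct_sub, dotProduct_smul, smul_eq_mul]
    funext idx
    rw [hw, hMbar, Matrix.fromBlocks_mulVec]
    simp only [Sum.elim_comp_inl, Sum.elim_comp_inr]
    cases idx with
    | inl i =>
      have hB : ((Matrix.of fun i (_ : Unit) => r i) *ᵥ fun _ => x) i = r i * x := by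
        simp [mulVec, dotProduct]
      have hA := congrFun hkey i
      simp only [Sum.elim_inl, Pi.add_apply, hB, hA, Pi.sub_apply, Pi.smul_apply,
        smul_eq_mul]
      ring
    | inr u =>
      have hC : ((Matrix.of fun (_ : Unit) i => r i) *ᵥ (M⁻¹ *ᵥ Rj - x • (M⁻¹ *ᵥ r))) u
          = r ⬝ᵥ (M⁻¹ *ᵥ Rj - x • (M⁻¹ *ᵥ r)) := rfl
      have hD : ((Matrix.of fun (_ : Unit) (_ : Unit) => d) *ᵥ fun _ => x) u = d * x := by
        simp [mulVec, dotProduct]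
      simp only [Sum.elim_inr, Pi.add_apply, hC, hD, hdot]
      rw [hswap r Rj]
      have hxs : x * (d - r ⬝ᵥ (M⁻¹ *ᵥ r)) = Rjk - Rj ⬝ᵥ (M⁻¹ *ᵥ r) := by
        rw [hx, div_mul_cancel₀ _ hsne]
      linear_combination hxs
  have hMbarDet : IsUnit Mbar.det := isUnit_iff_ne_zero.2 (ne_of_gt hpd.det_pos)
  have hinv : Mbar⁻¹ *ᵥ (Sum.elim Rj fun _ => Rjk) = w := by
    rw [← hsol, mulVec_mulVec, Matrix.nonsing_inv_mul _ hMbarDet, one_mulVec]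
  rw [hinv, hw, Fintype.sum_sum_type]
  simp [Finset.sum_sub_distrib, smul_eq_mul]
  rw [← Finset.mul_sum]
  ring
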